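/- Assume A is indecomposable and the Weyl group W is infinite. Let ω ∈ W be such that ℓ(ω^l) = |l|·ℓ(ω) for all l ∈ ℤ, and let β be a real root belonging to Δ₊ such that ωβ ∈ Δ₋. Then for every integer l, ω^l β ∈ Δ₋ if and only if l ≥ 1. -/

import Mathlib

open Matrix Filter Pointwise

namespace KacMoodyPaper

variable {n : ℕ}

/-- `A` is a generalized Cartan matrix. -/
def IsGCM (A : Matrix (Fin n) (Fin n) ℤ) : Prop :=
  (∀ i, A i i = 2) ∧ (∀ i j, i ≠ j → A i j ≤ 0) ∧ (∀ i j, A i j = 0 ↔ A j i = 0)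

/-- The simple reflection `s i` as a linear map: `s i v = v - (A *ᵥ v) i • e i`. -/
def sMap (A : Matrix (Fin n) (Fin n) ℤ) (i : Fin n) : (Fin n → ℤ) →ₗ[ℤ] (Fin n → ℤ) where
  toFun v := v - (A.mulVec v i) • Pi.single i 1
  map_add' x y := by
    simp only [Matrix.mulVec_add, Pi.add_apply, add_smul]
    abel
  map_smul' c x := by
    simp only [Matrix.mulVec_smul, Pi.smul_apply, smul_eq_mul, RingHom.id_apply, smul_sub,
      smul_smul]

theorem sMap_involutive (A : Matrix (Fin n) (Fin n) ℤ) (i : Fin n) (h2 : A i i = 2)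
    (v : Fin n → ℤ) : sMap A i (sMap A i v) = v := by
  have hAe : A.mulVec (Pi.single i 1) i = A i i := by
    simp [Matrix.mulVec_single]
  simp only [sMap, LinearMap.coe_mk, AddHom.coe_mk, Matrix.mulVec_sub, Matrix.mulVec_smul,
    Pi.sub_apply, Pi.smul_apply, hAe, h2, smul_eq_mul]
  ring_nf

/-- The simple reflection `s i` as a `ℤ`-linear automorphism of `ℤ^n`
(determined by `s i (e j) = e j - A i j • e i`). -/
def s (A : Matrix (Fin n) (Fin n) ℤ) (h2 : ∀ i, A i i = 2) (i : Fin n) :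
    (Fin n → ℤ) ≃ₗ[ℤ] (Fin n → ℤ) :=
  LinearEquiv.ofLinear (sMap A i) (sMap A i)
    (LinearMap.ext fun v => sMap_involutive A i (h2 i) v)
    (LinearMap.ext fun v => sMap_involutive A i (h2 i) v)

/-- The Coxeter element `w = s 1 ∘ s 2 ∘ ⋯ ∘ s n` (applying `s n` first). -/
def cox (A : Matrix (Fin n) (Fin n) ℤ) (h2 : ∀ i, A i i = 2) :
    (Fin n → ℤ) ≃ₗ[ℤ] (Fin n → ℤ) :=
  (List.ofFn (fun i : Fin n => s A h2 i)).prod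

/-- The Weyl group: the subgroup of `GL(n, ℤ)` generated by the simple reflections. -/
def weyl (A : Matrix (Fin n) (Fin n) ℤ) (h2 : ∀ i, A i i = 2) :
    Subgroup ((Fin n → ℤ) ≃ₗ[ℤ] (Fin n → ℤ)) :=
  Subgroup.closure (Set.range (s A h2))

/-- The word length of `ω` with respect to the generators `s 1, …, s n`. -/
noncomputable def len (A : Matrix (Fin n) (Fin n) ℤ) (h2 : ∀ i, A i i = 2)
    (ω : (Fin n → ℤ) ≃ₗ[ℤ] (Fin n → ℤ)) : ℕ :=
  sInf {k | ∃ f : Fin k → Fin n, ω = (List.ofFn (fun j => s A h2 (f j))).prod}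

/-- `v ∈ ℤ^n` is positive: nonzero with all coordinates `≥ 0`. -/
def IsPos (v : Fin n → ℤ) : Prop := v ≠ 0 ∧ ∀ i, 0 ≤ v i

/-- The height of a vector: the sum of its coordinates. -/
def ht (v : Fin n → ℤ) : ℤ := ∑ i, v i

/-- The graph `Γ` on `{1, …, n}` with an edge between `i ≠ j` iff `A i j ≠ 0`. -/
def gcmGraph (A : Matrix (Fin n) (Fin n) ℤ) (hsym : ∀ i j, A i j = 0 ↔ A j i = 0) :
    SimpleGraph (Fin n) where
  Adj i j := i ≠ j ∧ A i j ≠ 0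
  symm := by
    constructor
    rintro i j ⟨hij, h⟩
    exact ⟨hij.symm, fun h0 => h ((hsym i j).mpr h0)⟩
  loopless := by constructor; rintro i ⟨h, -⟩; exact h rfl

/-- `A` is indecomposable: the graph `Γ` is connected. -/
def Indecomposable (A : Matrix (Fin n) (Fin n) ℤ) (hsym : ∀ i j, A i j = 0 ↔ A j i = 0) :
    Prop :=
  (gcmGraph A hsym).Connected

/-- `A` is of indefinite type: there is `u > 0` (componentwise) with `A·u < 0` componentwise. -/
def IndefiniteType (A : Matrix (Fin n) (Fin n) ℤ) : Prop :=
  ∃ u : Fin n → ℤ, (∀ i, 0 < u i) ∧ ∀ i, (A.mulVec u) i < 0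

/-- The fundamental set `K`: positive vectors with connected support and `A·v ≤ 0`. -/
def fundK (A : Matrix (Fin n) (Fin n) ℤ) (hsym : ∀ i j, A i j = 0 ↔ A j i = 0) :
    Set (Fin n → ℤ) :=
  {v | IsPos v ∧ ((gcmGraph A hsym).induce {i | v i ≠ 0}).Connected ∧
    ∀ i, (A.mulVec v) i ≤ 0}

/-- The real roots: the `W`-orbits of the standard basis vectors. -/
def realRoots (A : Matrix (Fin n) (Fin n) ℤ) (h2 : ∀ i, A i i = 2) : Set (Fin n → ℤ) :=
  {v | ∃ g ∈ weyl A h2, ∃ i : Fin n, v = g (Pi.single i 1)}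

/-- The positive imaginary roots: the `W`-orbit of the fundamental set `K`. -/
def posImRoots (A : Matrix (Fin n) (Fin n) ℤ) (h2 : ∀ i, A i i = 2)
    (hsym : ∀ i j, A i j = 0 ↔ A j i = 0) : Set (Fin n → ℤ) :=
  {v | ∃ g ∈ weyl A h2, ∃ k ∈ fundK A hsym, v = g k}

/-- The set of roots `Δ`. -/
def roots (A : Matrix (Fin n) (Fin n) ℤ) (h2 : ∀ i, A i i = 2)
    (hsym : ∀ i j, A i j = 0 ↔ A j i = 0) : Set (Fin n → ℤ) :=
  realRoots A h2 ∪ posImRoots A h2 hsym ∪ (-(posImRoots A h2 hsym))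

/-- The set of positive roots `Δ₊`. -/
def posRoots (A : Matrix (Fin n) (Fin n) ℤ) (h2 : ∀ i, A i i = 2)
    (hsym : ∀ i j, A i j = 0 ↔ A j i = 0) : Set (Fin n → ℤ) :=
  {v ∈ roots A h2 hsym | IsPos v}

/-- The set of negative roots `Δ₋ = -Δ₊`. -/
def negRoots (A : Matrix (Fin n) (Fin n) ℤ) (h2 : ∀ i, A i i = 2)
    (hsym : ∀ i j, A i j = 0 ↔ A j i = 0) : Set (Fin n → ℤ) :=
  -(posRoots A h2 hsym)


section Words

variable (A : Matrix (Fin n) (Fin n) ℤ) (h2 : ∀ i, A i i = 2)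

local notation "G" => ((Fin n → ℤ) ≃ₗ[ℤ] (Fin n → ℤ))

lemma mul_apply' (u v : G) (x : Fin n → ℤ) : (u * v) x = u (v x) := rfl

lemma s_apply (i : Fin n) (v : Fin n → ℤ) :
    s A h2 i v = v - (A.mulVec v i) • Pi.single i 1 := rfl

lemma s_mul_self (i : Fin n) : s A h2 i * s A h2 i = 1 :=
  LinearEquiv.ext fun v => sMap_involutive A i (h2 i) v

lemma s_mem (i : Fin n) : s A h2 i ∈ weyl A h2 :=
  Subgroup.subset_closure ⟨i, rfl⟩

/-- product of simple reflections along a list -/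
def word (L : List (Fin n)) : G := (L.map (s A h2)).prod

lemma word_nil : word A h2 [] = 1 := rfl

lemma word_cons (i : Fin n) (L : List (Fin n)) :
    word A h2 (i :: L) = s A h2 i * word A h2 L := by simp [word]

lemma word_append (L M : List (Fin n)) :
    word A h2 (L ++ M) = word A h2 L * word A h2 M := by simp [word]

lemma word_singleton (i : Fin n) : word A h2 [i] = s A h2 i := by simp [word]

lemma word_mem (L : List (Fin n)) : word A h2 L ∈ weyl A h2 := by
  induction L with
  | nil => exact Subgroup.one_mem _
  | cons i L ih => rw [word_cons]; exact Subgroup.mul_mem _ (s_mem A h2 i) ih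

lemma word_reverse_mul (L : List (Fin n)) :
    word A h2 L.reverse * word A h2 L = 1 := by
  induction L with
  | nil => simp [word]
  | cons i L ih =>
      rw [word_cons, List.reverse_cons, word_append, word_singleton]
      calc word A h2 L.reverse * s A h2 i * (s A h2 i * word A h2 L)
          = word A h2 L.reverse * (s A h2 i * s A h2 i) * word A h2 L := by group
        _ = 1 := by rw [s_mul_self]; group; exact ih

lemma word_inv (L : List (Fin n)) : (word A h2 L)⁻¹ = word A h2 L.reverse :=
  inv_eq_of_mul_eq_one_right (by
    have := word_reverse_mul A h2 L.reverse
    rwa [List.reverse_reverse] at this)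

def wordSubgroup : Subgroup ((Fin n → ℤ) ≃ₗ[ℤ] (Fin n → ℤ)) where
  carrier := {w | ∃ L, w = word A h2 L}
  one_mem' := ⟨[], rfl⟩
  mul_mem' := by
    rintro x y ⟨L, rfl⟩ ⟨M, rfl⟩
    exact ⟨L ++ M, (word_append A h2 L M).symm⟩
  inv_mem' := by
    rintro x ⟨L, rfl⟩
    exact ⟨L.reverse, word_inv A h2 L⟩

lemma mem_weyl_iff {w : G} : w ∈ weyl A h2 ↔ ∃ L : List (Fin n), w = word A h2 L := by
  constructor
  · intro hw
    refine (Subgroup.closure_le (wordSubgroup A h2) |>.mpr ?_) hw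
    rintro x ⟨i, rfl⟩
    exact ⟨[i], (word_singleton A h2 i).symm⟩
  · rintro ⟨L, rfl⟩; exact word_mem A h2 L

lemma len_set_eq (w : G) :
    {k | ∃ f : Fin k → Fin n, w = (List.ofFn (fun j => s A h2 (f j))).prod}
      = {k | ∃ L : List (Fin n), L.length = k ∧ w = word A h2 L} := by
  ext k
  constructor
  · rintro ⟨f, rfl⟩
    refine ⟨List.ofFn f, List.length_ofFn, ?_⟩
    rw [word, List.map_ofFn]
    rfl
  · rintro ⟨L, rfl, rfl⟩
    refine ⟨L.get, ?_⟩
    have h1 : (List.ofFn fun j => s A h2 (L.get j)) = L.map (s A h2) := by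
      rw [show (fun j => s A h2 (L.get j)) = (s A h2) ∘ L.get from rfl,
        ← List.map_ofFn, List.ofFn_get]
    rw [word, h1]

lemma len_le_of_word {w : G} (L : List (Fin n)) (h : w = word A h2 L) :
    len A h2 w ≤ L.length := by
  apply Nat.sInf_le
  rw [len_set_eq]
  exact ⟨L, rfl, h⟩

lemma exists_word_len {w : G} (hw : w ∈ weyl A h2) :
    ∃ L : List (Fin n), L.length = len A h2 w ∧ w = word A h2 L := by
  obtain ⟨L₀, rfl⟩ := (mem_weyl_iff A h2).mp hw
  have hne : {k | ∃ L : List (Fin n), L.length = k ∧ word A h2 L₀ = word A h2 L}.Nonempty :=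
    ⟨L₀.length, L₀, rfl, rfl⟩
  have := Nat.sInf_mem hne
  rw [len, len_set_eq]
  exact this

lemma len_one : len A h2 (1 : G) = 0 :=
  Nat.le_zero.mp (len_le_of_word A h2 [] rfl)

lemma eq_one_of_len_zero {w : G} (hw : w ∈ weyl A h2) (h : len A h2 w = 0) : w = 1 := by
  obtain ⟨L, hL, rfl⟩ := exists_word_len A h2 hw
  rw [h, List.length_eq_zero_iff] at hL
  rw [hL, word_nil]

lemma len_mul_le {u v : G} (hu : u ∈ weyl A h2) (hv : v ∈ weyl A h2) :
    len A h2 (u * v) ≤ len A h2 u + len A h2 v := by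
  obtain ⟨L, hL, rfl⟩ := exists_word_len A h2 hu
  obtain ⟨M, hM, rfl⟩ := exists_word_len A h2 hv
  calc len A h2 _ ≤ (L ++ M).length := len_le_of_word A h2 _ (word_append A h2 L M).symm
    _ = _ := by simp [hL, hM]

end Words
section Det

variable (A : Matrix (Fin n) (Fin n) ℤ) (h2 : ∀ i, A i i = 2)

local notation "G" => ((Fin n → ℤ) ≃ₗ[ℤ] (Fin n → ℤ))

lemma det_sMap (i : Fin n) (hii : A i i = 2) : LinearMap.det (sMap A i) = -1 := by
  rw [← LinearMap.det_toMatrix' (sMap A i)]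
  have key : LinearMap.toMatrix' (sMap A i)
      = (1 : Matrix (Fin n) (Fin n) ℤ).updateRow i
        (∑ k, (((1 : Matrix (Fin n) (Fin n) ℤ) i k) - A i k) • (1 : Matrix (Fin n) (Fin n) ℤ) k) := by
    ext p q
    rw [LinearMap.toMatrix'_apply]
    have hone : (fun j' => if j' = q then (1:ℤ) else 0) = Pi.single q 1 := by
      funext j'; simp [Pi.single_apply]
    have hmv : ∀ r, A.mulVec (Pi.single q (1:ℤ)) r = A r q := by
      intro r; simp [Matrix.mulVec_single]
    by_cases hp : p = i
    · subst hp
      simp only [Matrix.updateRow_self, Finset.sum_apply, Pi.smul_apply, smul_eq_mul,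
        Matrix.one_apply]
      rw [Finset.sum_eq_single q (fun k _ hk => by simp [if_neg hk]) (by simp)]
      simp only [sMap, LinearMap.coe_mk, AddHom.coe_mk, Pi.sub_apply, Pi.smul_apply,
        smul_eq_mul, hmv, Pi.single_apply]
      simp [eq_comm]
    · rw [Matrix.updateRow_ne hp]
      simp only [sMap, LinearMap.coe_mk, AddHom.coe_mk, Pi.sub_apply, Pi.smul_apply,
        smul_eq_mul, hmv, Pi.single_apply, Matrix.one_apply]
      rw [if_neg hp]
      ring
  rw [key, Matrix.det_updateRow_sum]
  simp [hii]

/-- determinant of a Weyl group element, as map to ℤ -/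
noncomputable def gdet (w : G) : ℤ := LinearMap.det (w : (Fin n → ℤ) →ₗ[ℤ] (Fin n → ℤ))

lemma gdet_mul (u v : G) : gdet (u * v) = gdet u * gdet v := by
  unfold gdet
  rw [LinearEquiv.coe_toLinearMap_mul, _root_.map_mul]

lemma gdet_one : gdet (1 : G) = 1 := by
  unfold gdet
  rw [LinearEquiv.coe_toLinearMap_one, LinearMap.det_id]

lemma gdet_s (i : Fin n) : gdet (s A h2 i) = -1 := det_sMap A i (h2 i)

lemma gdet_word (L : List (Fin n)) : gdet (word A h2 L) = (-1) ^ L.length := by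
  induction L with
  | nil => simpa [word_nil] using gdet_one
  | cons i L ih =>
      rw [word_cons, gdet_mul, gdet_s A h2 i, ih, List.length_cons]
      ring

lemma gdet_eq_pow_len {w : G} (hw : w ∈ weyl A h2) :
    gdet w = (-1) ^ (len A h2 w) := by
  obtain ⟨L, hL, rfl⟩ := exists_word_len A h2 hw
  rw [gdet_word, hL]

lemma len_mul_s_ne {w : G} (hw : w ∈ weyl A h2) (i : Fin n) :
    len A h2 (w * s A h2 i) ≠ len A h2 w := by
  intro h
  have h1 := gdet_eq_pow_len A h2 (Subgroup.mul_mem _ hw (s_mem A h2 i))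
  rw [gdet_mul, gdet_s A h2 i, gdet_eq_pow_len A h2 hw, h] at h1
  have h2' : ((-1 : ℤ)) ^ (len A h2 w) ≠ 0 := pow_ne_zero _ (by norm_num)
  have h3 : ((-1:ℤ) ^ (len A h2 w)) * (-1) = ((-1:ℤ) ^ (len A h2 w)) * 1 := by
    rw [mul_one]; exact h1
  have := mul_left_cancel₀ h2' h3
  norm_num at this

lemma len_mul_s_le {w : G} (hw : w ∈ weyl A h2) (i : Fin n) :
    len A h2 (w * s A h2 i) ≤ len A h2 w + 1 := by
  obtain ⟨L, hL, rfl⟩ := exists_word_len A h2 hw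
  calc len A h2 _ ≤ (L ++ [i]).length :=
        len_le_of_word A h2 _ (by rw [word_append, word_singleton])
    _ = _ := by simp [hL]

lemma len_mul_s_cases {w : G} (hw : w ∈ weyl A h2) (i : Fin n) :
    len A h2 (w * s A h2 i) = len A h2 w + 1 ∨ len A h2 (w * s A h2 i) + 1 = len A h2 w := by
  have h1 := len_mul_s_le A h2 hw i
  have h3 : w * s A h2 i * s A h2 i = w := by
    rw [mul_assoc, s_mul_self, mul_one]
  have h2' : len A h2 w ≤ len A h2 (w * s A h2 i) + 1 := by
    conv_lhs => rw [← h3]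
    exact len_mul_s_le A h2 (Subgroup.mul_mem _ hw (s_mem A h2 i)) i
  have h4 := len_mul_s_ne A h2 hw i
  omega

end Det
section TwoGen

variable (A : Matrix (Fin n) (Fin n) ℤ) (h2 : ∀ i, A i i = 2) (i j : Fin n)

local notation "G" => ((Fin n → ℤ) ≃ₗ[ℤ] (Fin n → ℤ))

/-- generator selector for the rank-2 subgroup -/
def gen (b : Bool) : G := if b then s A h2 i else s A h2 j

lemma gen_mul_self (b : Bool) : gen A h2 i j b * gen A h2 i j b = 1 := by
  cases b <;> simp [gen, s_mul_self]

/-- product of the two simple reflections along a bool list -/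
def word2 (L : List Bool) : G := (L.map (gen A h2 i j)).prod

lemma word2_nil : word2 A h2 i j [] = 1 := rfl

lemma word2_cons (b : Bool) (L : List Bool) :
    word2 A h2 i j (b :: L) = gen A h2 i j b * word2 A h2 i j L := by simp [word2]

lemma word2_append (L M : List Bool) :
    word2 A h2 i j (L ++ M) = word2 A h2 i j L * word2 A h2 i j M := by simp [word2]

lemma word2_singleton (b : Bool) : word2 A h2 i j [b] = gen A h2 i j b := by simp [word2]

lemma word2_eq_word (L : List Bool) :
    word2 A h2 i j L = word A h2 (L.map (fun b => if b then i else j)) := by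
  induction L with
  | nil => rfl
  | cons b L ih =>
      rw [word2_cons, List.map_cons, word_cons, ih]
      congr 1
      cases b <;> rfl

/-- membership in the rank-2 subgroup -/
def W2 (u : G) : Prop := ∃ L : List Bool, u = word2 A h2 i j L

lemma W2_one : W2 A h2 i j 1 := ⟨[], rfl⟩

lemma W2_mem_weyl {u : G} (hu : W2 A h2 i j u) : u ∈ weyl A h2 := by
  obtain ⟨L, rfl⟩ := hu
  rw [word2_eq_word]
  exact word_mem A h2 _

lemma W2_mul_gen {u : G} (hu : W2 A h2 i j u) (b : Bool) :
    W2 A h2 i j (u * gen A h2 i j b) := by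
  obtain ⟨L, rfl⟩ := hu
  exact ⟨L ++ [b], by rw [word2_append, word2_singleton]⟩

lemma W2_gen_mul {u : G} (hu : W2 A h2 i j u) (b : Bool) :
    W2 A h2 i j (gen A h2 i j b * u) := by
  obtain ⟨L, rfl⟩ := hu
  exact ⟨b :: L, by rw [word2_cons]⟩

/-- word length w.r.t. the two generators -/
noncomputable def len2 (u : G) : ℕ :=
  sInf {k | ∃ L : List Bool, L.length = k ∧ u = word2 A h2 i j L}

lemma len2_le_of_word2 {u : G} (L : List Bool) (h : u = word2 A h2 i j L) :
    len2 A h2 i j u ≤ L.length := Nat.sInf_le ⟨L, rfl, h⟩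

lemma exists_word2_len2 {u : G} (hu : W2 A h2 i j u) :
    ∃ L : List Bool, L.length = len2 A h2 i j u ∧ u = word2 A h2 i j L := by
  obtain ⟨L₀, rfl⟩ := hu
  have hne : {k | ∃ L : List Bool, L.length = k ∧
      word2 A h2 i j L₀ = word2 A h2 i j L}.Nonempty := ⟨L₀.length, L₀, rfl, rfl⟩
  exact Nat.sInf_mem hne

lemma len_le_len2 {u : G} (hu : W2 A h2 i j u) :
    len A h2 u ≤ len2 A h2 i j u := by
  obtain ⟨L, hL, rfl⟩ := exists_word2_len2 A h2 i j hu
  calc len A h2 _ ≤ (L.map (fun b => if b then i else j)).length :=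
        len_le_of_word A h2 _ (word2_eq_word A h2 i j L)
    _ = _ := by simp [hL]

lemma gdet_word2 (L : List Bool) : gdet (word2 A h2 i j L) = (-1) ^ L.length := by
  rw [word2_eq_word, gdet_word]
  simp

lemma gdet_eq_pow_len2 {u : G} (hu : W2 A h2 i j u) :
    gdet u = (-1) ^ (len2 A h2 i j u) := by
  obtain ⟨L, hL, rfl⟩ := exists_word2_len2 A h2 i j hu
  rw [gdet_word2, hL]

lemma len2_mul_gen_ne {u : G} (hu : W2 A h2 i j u) (b : Bool) :
    len2 A h2 i j (u * gen A h2 i j b) ≠ len2 A h2 i j u := by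
  intro h
  have hgb : gdet (gen A h2 i j b) = -1 := by cases b <;> exact gdet_s A h2 _
  have h1 := gdet_eq_pow_len2 A h2 i j (W2_mul_gen A h2 i j hu b)
  rw [gdet_mul, hgb, gdet_eq_pow_len2 A h2 i j hu, h] at h1
  have h2' : ((-1 : ℤ)) ^ (len2 A h2 i j u) ≠ 0 := pow_ne_zero _ (by norm_num)
  have h3 : ((-1:ℤ) ^ (len2 A h2 i j u)) * (-1) = ((-1:ℤ) ^ (len2 A h2 i j u)) * 1 := by
    rw [mul_one]; exact h1
  have := mul_left_cancel₀ h2' h3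
  norm_num at this

lemma len2_mul_gen_le {u : G} (hu : W2 A h2 i j u) (b : Bool) :
    len2 A h2 i j (u * gen A h2 i j b) ≤ len2 A h2 i j u + 1 := by
  obtain ⟨L, hL, rfl⟩ := exists_word2_len2 A h2 i j hu
  calc len2 A h2 i j _ ≤ (L ++ [b]).length :=
        len2_le_of_word2 A h2 i j _ (by rw [word2_append, word2_singleton])
    _ = _ := by simp [hL]

lemma len2_gen_mul_le {u : G} (hu : W2 A h2 i j u) (b : Bool) :
    len2 A h2 i j (gen A h2 i j b * u) ≤ len2 A h2 i j u + 1 := by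
  obtain ⟨L, hL, rfl⟩ := exists_word2_len2 A h2 i j hu
  calc len2 A h2 i j _ ≤ (b :: L).length :=
        len2_le_of_word2 A h2 i j _ (by rw [word2_cons])
    _ = _ := by simp [hL]

/-- the alternating list of given length whose last element is `b` -/
def alt2 : ℕ → Bool → List Bool
  | 0, _ => []
  | (k+1), b => alt2 k (!b) ++ [b]

@[simp] lemma alt2_length : ∀ (k : ℕ) (b : Bool), (alt2 k b).length = k := by
  intro k
  induction k with
  | zero => intro b; rfl
  | succ k ih => intro b; simp [alt2, ih]

lemma alt2_chain : ∀ (k : ℕ) (b : Bool), List.Chain' (· ≠ ·) (alt2 k b) := by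
  intro k
  induction k with
  | zero => intro b; simp [alt2, List.Chain']
  | succ k ih =>
      intro b
      rw [alt2, List.Chain', List.isChain_append]
      refine ⟨ih (!b), by simp, ?_⟩
      intro x hx y hy
      simp at hy
      subst hy
      cases k with
      | zero => simp [alt2] at hx
      | succ m =>
          rw [alt2, List.getLast?_concat] at hx
          simp at hx
          subst hx
          simp

lemma alt2_split (p q : ℕ) (b : Bool) :
    ∃ c, alt2 (p + q) b = alt2 p c ++ alt2 q b := by
  induction q generalizing b with
  | zero => exact ⟨b, by simp [alt2]⟩
  | succ q ih =>
      obtain ⟨c, hc⟩ := ih (b := !b)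
      refine ⟨c, ?_⟩
      show alt2 ((p + q) + 1) b = _
      rw [alt2, hc, alt2, List.append_assoc]

lemma alt2_cons (m : ℕ) (b : Bool) :
    alt2 (m + 1) b = (if Even m then b else !b) :: alt2 m b := by
  induction m generalizing b with
  | zero => simp [alt2]
  | succ m ih =>
      show alt2 ((m+1)+1) b = _
      rw [alt2, ih (!b), alt2]
      have : (if Even m then !b else !(!b)) = (if Even (m+1) then b else !b) := by
        rcases Nat.even_or_odd m with h | h
        · have h1 : ¬ Even (m+1) := by simpa [Nat.even_add_one] using h
          simp [h, h1]
        · have h0 : ¬ Even m := Nat.not_even_iff_odd.mpr h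
          have h1 : Even (m+1) := by simpa [Nat.even_add_one] using h0
          simp [h0, h1]
      rw [this]
      rfl

lemma alt2_unique : ∀ (L : List Bool), List.Chain' (· ≠ ·) L →
    ∀ b, L.getLast? = some b → L = alt2 L.length b := by
  intro L
  induction L using List.reverseRecOn with
  | nil => intro _ b h; simp at h
  | append_singleton L a ih =>
      intro hchain b hb
      rw [List.getLast?_concat] at hb
      have hab : a = b := Option.some.inj hb
      subst hab
      rw [List.Chain', List.isChain_append] at hchain
      obtain ⟨hcL, -, hlast⟩ := hchain
      have hlen : (L ++ [a]).length = L.length + 1 := by simp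
      rw [hlen]
      rw [show alt2 (L.length + 1) a = alt2 L.length (!a) ++ [a] from rfl]
      congr 1
      cases hL0 : L.getLast? with
      | none =>
          have : L = [] := List.getLast?_eq_none_iff.mp hL0
          subst this; rfl
      | some c =>
          have hca : c ≠ a := hlast c (by simp [hL0]) a (by simp)
          have hc : c = !a := by cases c <;> cases a <;> first | rfl | (exact absurd rfl hca)
          have hres := ih hcL c hL0
          rw [hc] at hres
          exact hres

lemma word2_reduce : ∀ (L : List Bool), ∃ L', List.Chain' (· ≠ ·) L' ∧
    L'.length ≤ L.length ∧ word2 A h2 i j L' = word2 A h2 i j L := by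
  intro L
  induction L with
  | nil => exact ⟨[], by simp [List.Chain'], by simp, rfl⟩
  | cons x M ih =>
      obtain ⟨L', hchain, hlen, hprod⟩ := ih
      cases hL' : L' with
      | nil =>
          refine ⟨[x], by simp [List.Chain'], by simp, ?_⟩
          rw [word2_singleton, word2_cons, ← hprod, hL', word2_nil, mul_one]
      | cons z T =>
          by_cases hxz : x = z
          · subst hxz
            refine ⟨T, ?_, ?_, ?_⟩
            · rw [hL'] at hchain; exact hchain.tail
            · have := hlen; rw [hL'] at this; simp at this ⊢; omega
            · rw [word2_cons, ← hprod, hL', word2_cons, ← mul_assoc,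
                gen_mul_self, one_mul]
          · refine ⟨x :: L', ?_, by simpa using hlen, ?_⟩
            · rw [hL', List.Chain', List.isChain_cons_cons]
              rw [hL'] at hchain
              exact ⟨hxz, hchain⟩
            · rw [word2_cons, word2_cons, hprod]

lemma exists_alt_word2 {u : G} (hu : W2 A h2 i j u) :
    ∃ L : List Bool, List.Chain' (· ≠ ·) L ∧ L.length = len2 A h2 i j u ∧
      u = word2 A h2 i j L := by
  obtain ⟨M, hM, rfl⟩ := exists_word2_len2 A h2 i j hu
  obtain ⟨L, hchain, hlen, hprod⟩ := word2_reduce A h2 i j M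
  have h1 : len2 A h2 i j (word2 A h2 i j M) ≤ L.length :=
    len2_le_of_word2 A h2 i j L hprod.symm
  exact ⟨L, hchain, by omega, hprod.symm⟩

end TwoGen
section Plane

variable (A : Matrix (Fin n) (Fin n) ℤ) (h2 : ∀ i, A i i = 2) (i j : Fin n)

local notation "G" => ((Fin n → ℤ) ≃ₗ[ℤ] (Fin n → ℤ))

/-- embedding of the coordinate plane spanned by `e i, e j` -/
def iota (p : ℤ × ℤ) : Fin n → ℤ := p.1 • Pi.single i 1 + p.2 • Pi.single j 1

lemma s_i_plane (v : Fin n → ℤ) (x y : ℤ) :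
    s A h2 i (v + x • Pi.single i 1 + y • Pi.single j 1)
      = v + (-(A.mulVec v i) - x - (A i j) * y) • Pi.single i 1 + y • Pi.single j 1 := by
  rw [s_apply]
  have hm : A.mulVec (v + x • Pi.single i 1 + y • Pi.single j 1) i
      = A.mulVec v i + x * A i i + y * A i j := by
    rw [Matrix.mulVec_add, Matrix.mulVec_add, Matrix.mulVec_smul, Matrix.mulVec_smul]
    simp [Matrix.mulVec_single, mul_comm]
  rw [hm, h2 i]
  module

lemma s_j_plane (v : Fin n → ℤ) (x y : ℤ) :
    s A h2 j (v + x • Pi.single i 1 + y • Pi.single j 1)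
      = v + x • Pi.single i 1 + (-(A.mulVec v j) - (A j i) * x - y) • Pi.single j 1 := by
  rw [s_apply]
  have hm : A.mulVec (v + x • Pi.single i 1 + y • Pi.single j 1) j
      = A.mulVec v j + x * A j i + y * A j j := by
    rw [Matrix.mulVec_add, Matrix.mulVec_add, Matrix.mulVec_smul, Matrix.mulVec_smul]
    simp [Matrix.mulVec_single, mul_comm]
  rw [hm, h2 j]
  module

/-- the step maps on the plane -/
def fs (p : ℤ × ℤ) : ℤ × ℤ := (-(A i j) * p.2 - p.1, p.2)

def ft (p : ℤ × ℤ) : ℤ × ℤ := (p.1, -(A j i) * p.1 - p.2)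

lemma s_i_iota (p : ℤ × ℤ) : s A h2 i (iota i j p) = iota i j (fs A i j p) := by
  have h0 : iota i j p = 0 + p.1 • Pi.single i 1 + p.2 • Pi.single j 1 := by
    simp [iota]
  rw [h0, s_i_plane]
  simp only [Matrix.mulVec_zero, Pi.zero_apply, neg_zero, iota, fs]
  module

lemma s_j_iota (p : ℤ × ℤ) : s A h2 j (iota i j p) = iota i j (ft A i j p) := by
  have h0 : iota i j p = 0 + p.1 • Pi.single i 1 + p.2 • Pi.single j 1 := by
    simp [iota]
  rw [h0, s_j_plane]
  simp only [Matrix.mulVec_zero, Pi.zero_apply, neg_zero, iota, ft]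
  module

/-- the orbit of `e i` under the alternating words ending in the `j`-reflection -/
def pt : ℕ → ℤ × ℤ
  | 0 => (1, 0)
  | (m+1) => if Even m then ft A i j (pt m) else fs A i j (pt m)

lemma rho_pt : ∀ m, (word2 A h2 i j (alt2 m false)) (Pi.single i 1)
    = iota i j (pt A i j m) := by
  intro m
  induction m with
  | zero =>
      show (1 : G) (Pi.single i 1) = _
      simp [iota, pt]
  | succ m ih =>
      rw [alt2_cons, word2_cons, mul_apply', ih]
      rcases Nat.even_or_odd m with h | h
      · rw [if_pos h]
        show s A h2 j _ = _
        rw [s_j_iota]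
        rw [show pt A i j (m+1) = ft A i j (pt A i j m) from by rw [pt, if_pos h]]
      · have h' : ¬ Even m := Nat.not_even_iff_odd.mpr h
        rw [if_neg h']
        show s A h2 i _ = _
        rw [s_i_iota]
        rw [show pt A i j (m+1) = fs A i j (pt A i j m) from by rw [pt, if_neg h']]

/-- in the infinite dihedral case, the whole orbit stays nonnegative -/
lemma pt_nonneg_big (ha : 0 ≤ -(A i j)) (hb : 0 ≤ -(A j i))
    (hab : 4 ≤ (-(A i j)) * (-(A j i))) :
    ∀ m, 0 ≤ (pt A i j m).1 ∧ 0 ≤ (pt A i j m).2 := by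
  set a := -(A i j) with hadef
  set b := -(A j i) with hbdef
  have ha1 : 1 ≤ a := by nlinarith
  have hb1 : 1 ≤ b := by nlinarith
  have key : ∀ m, 0 ≤ (pt A i j m).1 ∧ 0 ≤ (pt A i j m).2 ∧
      (if Even m then (m = 0 ∨ 2 * (pt A i j m).2 ≤ b * (pt A i j m).1)
        else 2 * (pt A i j m).1 ≤ a * (pt A i j m).2) := by
    intro m
    induction m with
    | zero => exact ⟨by norm_num [pt], by norm_num [pt], by simp [pt]⟩
    | succ m ih =>
        obtain ⟨hx, hy, hinv⟩ := ih
        obtain ⟨x, y, hp⟩ : ∃ x y, pt A i j m = (x, y) :=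
          ⟨(pt A i j m).1, (pt A i j m).2, rfl⟩
        rw [hp] at hx hy hinv
        dsimp only at hx hy hinv
        rcases Nat.even_or_odd m with h | h
        · rw [if_pos h] at hinv
          have hval : pt A i j (m+1) = (x, b * x - y) := by
            rw [pt, if_pos h, hp]
            show (x, -(A j i) * x - y) = _
            rw [← hbdef]
          have hodd : ¬ Even (m + 1) := by simpa [Nat.even_add_one] using h
          rw [hval, if_neg hodd]
          dsimp only
          rcases hinv with h0 | hinv
          · have hx1 : x = 1 ∧ y = 0 := by
              have : pt A i j m = (1, 0) := by rw [h0]; rfl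
              rw [hp] at this
              exact ⟨congrArg Prod.fst this, congrArg Prod.snd this⟩
            obtain ⟨hx1, hy0⟩ := hx1
            subst hx1; subst hy0
            refine ⟨by norm_num, by linarith, by nlinarith⟩
          · refine ⟨hx, by linarith, ?_⟩
            nlinarith [mul_le_mul_of_nonneg_left (show b*x ≤ 2*(b*x - y) by linarith)
              (show (0:ℤ) ≤ a by linarith), mul_le_mul_of_nonneg_right hab hx]
        · have h' : ¬ Even m := Nat.not_even_iff_odd.mpr h
          rw [if_neg h'] at hinv
          have hval : pt A i j (m+1) = (a * y - x, y) := by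
            rw [pt, if_neg h', hp]
            show (-(A i j) * y - x, y) = _
            rw [← hadef]
          have heven : Even (m + 1) := by simpa [Nat.even_add_one] using h'
          rw [hval, if_pos heven]
          dsimp only
          refine ⟨by linarith, hy, Or.inr ?_⟩
          nlinarith [mul_le_mul_of_nonneg_left (show a*y ≤ 2*(a*y - x) by linarith)
            (show (0:ℤ) ≤ b by linarith), mul_le_mul_of_nonneg_right hab hy]
  intro m
  exact ⟨(key m).1, (key m).2.1⟩

/-- shortening: once the braid relation of order `h` holds, long alternating words shorten -/
lemma shorten (h : ℕ) (hh : 1 ≤ h)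
    (hbr : word2 A h2 i j (alt2 h false) = word2 A h2 i j (alt2 h true))
    (m : ℕ) (hm : h ≤ m) :
    len2 A h2 i j (word2 A h2 i j (alt2 m false) * s A h2 i) ≤ m - 1 := by
  obtain ⟨c, hc⟩ := alt2_split (m - h) h false
  rw [show m - h + h = m from by omega] at hc
  have halt : alt2 h true = alt2 (h-1) false ++ [true] := by
    rw [show h = (h-1) + 1 from by omega, alt2]
    norm_num
  have hgen : s A h2 i = gen A h2 i j true := rfl
  have : word2 A h2 i j (alt2 m false) * s A h2 i
      = word2 A h2 i j (alt2 (m-h) c ++ alt2 (h-1) false) := by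
    rw [hc, word2_append, hbr, halt, word2_append, word2_singleton, hgen,
      mul_assoc, mul_assoc, gen_mul_self, mul_one, ← word2_append]
  calc len2 A h2 i j _ ≤ (alt2 (m-h) c ++ alt2 (h-1) false).length :=
        len2_le_of_word2 A h2 i j _ this
    _ ≤ m - 1 := by simp; omega

end Plane
section Rank2

variable (A : Matrix (Fin n) (Fin n) ℤ) (h2 : ∀ i, A i i = 2) (i j : Fin n)

local notation "G" => ((Fin n → ℤ) ≃ₗ[ℤ] (Fin n → ℤ))

lemma one_apply' (x : Fin n → ℤ) : (1 : G) x = x := rfl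

lemma pt_succ (m : ℕ) : pt A i j (m+1)
    = if Even m then ft A i j (pt A i j m) else fs A i j (pt A i j m) := by rw [pt]

lemma pt_zero : pt A i j 0 = (1, 0) := rfl

lemma pt_one : pt A i j 1 = (1, -(A j i)) := by
  rw [pt_succ, if_pos (Even.zero), pt_zero]
  show (_, -(A j i) * 1 - 0) = _
  norm_num

lemma gen_true : gen A h2 i j true = s A h2 i := rfl
lemma gen_false : gen A h2 i j false = s A h2 j := rfl

lemma braid00 (ha : A i j = 0) (hb : A j i = 0) :
    word2 A h2 i j (alt2 2 false) = word2 A h2 i j (alt2 2 true) := by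
  refine LinearEquiv.ext fun v => ?_
  rw [show alt2 2 false = [true, false] from rfl, show alt2 2 true = [false, true] from rfl]
  simp only [word2_cons, word2_nil, mul_apply', gen_true, gen_false, mul_one, one_apply']
  rw [show v = v + (0:ℤ) • Pi.single i 1 + (0:ℤ) • Pi.single j 1 from by simp]
  simp only [s_i_plane, s_j_plane, ha, hb]
  module

lemma braid11 (ha : A i j = -1) (hb : A j i = -1) :
    word2 A h2 i j (alt2 3 false) = word2 A h2 i j (alt2 3 true) := by
  refine LinearEquiv.ext fun v => ?_
  rw [show alt2 3 false = [false, true, false] from rfl,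
    show alt2 3 true = [true, false, true] from rfl]
  simp only [word2_cons, word2_nil, mul_apply', gen_true, gen_false, mul_one, one_apply']
  rw [show v = v + (0:ℤ) • Pi.single i 1 + (0:ℤ) • Pi.single j 1 from by simp]
  simp only [s_i_plane, s_j_plane, ha, hb]
  module

lemma braid12 (ha : A i j = -1) (hb : A j i = -2) :
    word2 A h2 i j (alt2 4 false) = word2 A h2 i j (alt2 4 true) := by
  refine LinearEquiv.ext fun v => ?_
  rw [show alt2 4 false = [true, false, true, false] from rfl,
    show alt2 4 true = [false, true, false, true] from rfl]
  simp only [word2_cons, word2_nil, mul_apply', gen_true, gen_false, mul_one, one_apply']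
  rw [show v = v + (0:ℤ) • Pi.single i 1 + (0:ℤ) • Pi.single j 1 from by simp]
  simp only [s_i_plane, s_j_plane, ha, hb]
  module

lemma braid21 (ha : A i j = -2) (hb : A j i = -1) :
    word2 A h2 i j (alt2 4 false) = word2 A h2 i j (alt2 4 true) := by
  refine LinearEquiv.ext fun v => ?_
  rw [show alt2 4 false = [true, false, true, false] from rfl,
    show alt2 4 true = [false, true, false, true] from rfl]
  simp only [word2_cons, word2_nil, mul_apply', gen_true, gen_false, mul_one, one_apply']
  rw [show v = v + (0:ℤ) • Pi.single i 1 + (0:ℤ) • Pi.single j 1 from by simp]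
  simp only [s_i_plane, s_j_plane, ha, hb]
  module

lemma braid13 (ha : A i j = -1) (hb : A j i = -3) :
    word2 A h2 i j (alt2 6 false) = word2 A h2 i j (alt2 6 true) := by
  refine LinearEquiv.ext fun v => ?_
  rw [show alt2 6 false = [true, false, true, false, true, false] from rfl,
    show alt2 6 true = [false, true, false, true, false, true] from rfl]
  simp only [word2_cons, word2_nil, mul_apply', gen_true, gen_false, mul_one, one_apply']
  rw [show v = v + (0:ℤ) • Pi.single i 1 + (0:ℤ) • Pi.single j 1 from by simp]
  simp only [s_i_plane, s_j_plane, ha, hb]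
  module

lemma braid31 (ha : A i j = -3) (hb : A j i = -1) :
    word2 A h2 i j (alt2 6 false) = word2 A h2 i j (alt2 6 true) := by
  refine LinearEquiv.ext fun v => ?_
  rw [show alt2 6 false = [true, false, true, false, true, false] from rfl,
    show alt2 6 true = [false, true, false, true, false, true] from rfl]
  simp only [word2_cons, word2_nil, mul_apply', gen_true, gen_false, mul_one, one_apply']
  rw [show v = v + (0:ℤ) • Pi.single i 1 + (0:ℤ) • Pi.single j 1 from by simp]
  simp only [s_i_plane, s_j_plane, ha, hb]
  module

/-- the main rank-2 positivity lemma -/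
lemma rank2 (hij : i ≠ j) (hAij : A i j ≤ 0) (hAji : A j i ≤ 0)
    (hzero : A i j = 0 ↔ A j i = 0) {u : G} (hu : W2 A h2 i j u)
    (hlt : len2 A h2 i j u < len2 A h2 i j (u * s A h2 i)) :
    ∃ p : ℤ × ℤ, 0 ≤ p.1 ∧ 0 ≤ p.2 ∧ u (Pi.single i 1) = iota i j p := by
  obtain ⟨L, hchain, hlen, hLu⟩ := exists_alt_word2 A h2 i j hu
  by_cases hnil : L = []
  · refine ⟨(1, 0), by norm_num, by norm_num, ?_⟩
    rw [hLu, hnil, word2_nil, one_apply']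
    simp [iota]
  -- the last letter must be `false`
  have hblast : L.getLast? = some (L.getLast hnil) := List.getLast?_eq_getLast hnil
  by_cases hbt : L.getLast hnil = true
  · exfalso
    have hsplit : L.dropLast ++ [true] = L := by
      conv_rhs => rw [← List.dropLast_append_getLast hnil]
      rw [hbt]
    have hshort : u * s A h2 i = word2 A h2 i j L.dropLast := by
      conv_lhs => rw [hLu, ← hsplit]
      rw [word2_append, word2_singleton, gen_true, mul_assoc, s_mul_self, mul_one]
    have h1 : len2 A h2 i j (u * s A h2 i) ≤ L.length - 1 := by
      calc len2 A h2 i j _ ≤ L.dropLast.length := len2_le_of_word2 A h2 i j _ hshort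
        _ = L.length - 1 := by simp
    have h2' : 1 ≤ L.length := by
      cases L with
      | nil => exact absurd rfl hnil
      | cons a t => simp
    omega
  have hbf : L.getLast hnil = false := by
    cases h : L.getLast hnil with
    | false => rfl
    | true => exact absurd h hbt
  rw [hbf] at hblast
  have hLalt : L = alt2 L.length false := alt2_unique L hchain false hblast
  have hu_rho : u = word2 A h2 i j (alt2 L.length false) := by rw [hLu, ← hLalt]
  have hux : u (Pi.single i 1) = iota i j (pt A i j L.length) := by
    rw [hu_rho]; exact rho_pt A h2 i j L.length
  by_cases hbig : 4 ≤ (-(A i j)) * (-(A j i))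
  · obtain ⟨hx, hy⟩ := pt_nonneg_big A i j (by omega) (by omega) hbig L.length
    exact ⟨pt A i j L.length, hx, hy, hux⟩
  -- finite cases
  have hsmall : (-(A i j)) * (-(A j i)) ≤ 3 := by linarith [not_le.mp hbig]
  have hcases : (A i j = 0 ∧ A j i = 0) ∨ (A i j = -1 ∧ A j i = -1) ∨
      (A i j = -1 ∧ A j i = -2) ∨ (A i j = -2 ∧ A j i = -1) ∨
      (A i j = -1 ∧ A j i = -3) ∨ (A i j = -3 ∧ A j i = -1) := by
    by_cases hp0 : A i j = 0
    · exact Or.inl ⟨hp0, hzero.mp hp0⟩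
    · have hq0 : A j i ≠ 0 := fun h => hp0 (hzero.mpr h)
      have hp1 : 1 ≤ -(A i j) := by omega
      have hq1 : 1 ≤ -(A j i) := by omega
      have hp3 : -(A i j) ≤ 3 := by nlinarith
      have hq3 : -(A j i) ≤ 3 := by nlinarith
      have hno : ¬ (2 ≤ -(A i j) ∧ 2 ≤ -(A j i)) := by
        rintro ⟨hh1, hh2⟩; nlinarith
      right
      omega
  -- helper for the contradiction when L.length ≥ order
  have hshorten : ∀ h : ℕ, 1 ≤ h →
      word2 A h2 i j (alt2 h false) = word2 A h2 i j (alt2 h true) →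
      L.length < h := by
    intro h hh hbr
    by_contra hge
    push_neg at hge
    have := shorten A h2 i j h hh hbr L.length hge
    rw [← hu_rho] at this
    omega
  have hgoal : 0 ≤ (pt A i j L.length).1 ∧ 0 ≤ (pt A i j L.length).2 := by
    rcases hcases with ⟨ha, hb⟩ | ⟨ha, hb⟩ | ⟨ha, hb⟩ | ⟨ha, hb⟩ | ⟨ha, hb⟩ | ⟨ha, hb⟩
    · -- (0,0), order 2
      have hm := hshorten 2 (by norm_num) (braid00 A h2 i j ha hb)
      have e1 : pt A i j 1 = (1, 0) := by rw [pt_one, hb]; norm_num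
      interval_cases hL : L.length
      · rw [pt_zero]; norm_num
      · rw [e1]; norm_num
    · -- (1,1), order 3
      have hm := hshorten 3 (by norm_num) (braid11 A h2 i j ha hb)
      have e1 : pt A i j 1 = (1, 1) := by rw [pt_one, hb]; norm_num
      have e2 : pt A i j 2 = (0, 1) := by
        rw [pt_succ, if_neg (by decide), e1]
        show (-(A i j) * 1 - 1, 1) = _
        rw [ha]; norm_num
      interval_cases hL : L.length
      · rw [pt_zero]; norm_num
      · rw [e1]; norm_num
      · rw [e2]; norm_num
    · -- (1,2), order 4
      have hm := hshorten 4 (by norm_num) (braid12 A h2 i j ha hb)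
      have e1 : pt A i j 1 = (1, 2) := by rw [pt_one, hb]; norm_num
      have e2 : pt A i j 2 = (1, 2) := by
        rw [pt_succ, if_neg (by decide), e1]
        show (-(A i j) * 2 - 1, 2) = _
        rw [ha]; norm_num
      have e3 : pt A i j 3 = (1, 0) := by
        rw [pt_succ, if_pos (by decide), e2]
        show (1, -(A j i) * 1 - 2) = _
        rw [hb]; norm_num
      interval_cases hL : L.length
      · rw [pt_zero]; norm_num
      · rw [e1]; norm_num
      · rw [e2]; norm_num
      · rw [e3]; norm_num
    · -- (2,1), order 4
      have hm := hshorten 4 (by norm_num) (braid21 A h2 i j ha hb)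
      have e1 : pt A i j 1 = (1, 1) := by rw [pt_one, hb]; norm_num
      have e2 : pt A i j 2 = (1, 1) := by
        rw [pt_succ, if_neg (by decide), e1]
        show (-(A i j) * 1 - 1, 1) = _
        rw [ha]; norm_num
      have e3 : pt A i j 3 = (1, 0) := by
        rw [pt_succ, if_pos (by decide), e2]
        show (1, -(A j i) * 1 - 1) = _
        rw [hb]; norm_num
      interval_cases hL : L.length
      · rw [pt_zero]; norm_num
      · rw [e1]; norm_num
      · rw [e2]; norm_num
      · rw [e3]; norm_num
    · -- (1,3), order 6
      have hm := hshorten 6 (by norm_num) (braid13 A h2 i j ha hb)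
      have e1 : pt A i j 1 = (1, 3) := by rw [pt_one, hb]; norm_num
      have e2 : pt A i j 2 = (2, 3) := by
        rw [pt_succ, if_neg (by decide), e1]
        show (-(A i j) * 3 - 1, 3) = _
        rw [ha]; norm_num
      have e3 : pt A i j 3 = (2, 3) := by
        rw [pt_succ, if_pos (by decide), e2]
        show (2, -(A j i) * 2 - 3) = _
        rw [hb]; norm_num
      have e4 : pt A i j 4 = (1, 3) := by
        rw [pt_succ, if_neg (by decide), e3]
        show (-(A i j) * 3 - 2, 3) = _
        rw [ha]; norm_num
      have e5 : pt A i j 5 = (1, 0) := by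
        rw [pt_succ, if_pos (by decide), e4]
        show (1, -(A j i) * 1 - 3) = _
        rw [hb]; norm_num
      interval_cases hL : L.length
      · rw [pt_zero]; norm_num
      · rw [e1]; norm_num
      · rw [e2]; norm_num
      · rw [e3]; norm_num
      · rw [e4]; norm_num
      · rw [e5]; norm_num
    · -- (3,1), order 6
      have hm := hshorten 6 (by norm_num) (braid31 A h2 i j ha hb)
      have e1 : pt A i j 1 = (1, 1) := by rw [pt_one, hb]; norm_num
      have e2 : pt A i j 2 = (2, 1) := by
        rw [pt_succ, if_neg (by decide), e1]
        show (-(A i j) * 1 - 1, 1) = _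
        rw [ha]; norm_num
      have e3 : pt A i j 3 = (2, 1) := by
        rw [pt_succ, if_pos (by decide), e2]
        show (2, -(A j i) * 2 - 1) = _
        rw [hb]; norm_num
      have e4 : pt A i j 4 = (1, 1) := by
        rw [pt_succ, if_neg (by decide), e3]
        show (-(A i j) * 1 - 2, 1) = _
        rw [ha]; norm_num
      have e5 : pt A i j 5 = (1, 0) := by
        rw [pt_succ, if_pos (by decide), e4]
        show (1, -(A j i) * 1 - 1) = _
        rw [hb]; norm_num
      interval_cases hL : L.length
      · rw [pt_zero]; norm_num
      · rw [e1]; norm_num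
      · rw [e2]; norm_num
      · rw [e3]; norm_num
      · rw [e4]; norm_num
      · rw [e5]; norm_num
  exact ⟨pt A i j L.length, hgoal.1, hgoal.2, hux⟩

end Rank2
section FL

variable (A : Matrix (Fin n) (Fin n) ℤ) (h2 : ∀ i, A i i = 2)

local notation "G" => ((Fin n → ℤ) ≃ₗ[ℤ] (Fin n → ℤ))

lemma s_ne_one (j : Fin n) : s A h2 j ≠ 1 := by
  intro h
  have h1 : s A h2 j (Pi.single j 1) = Pi.single j 1 := by rw [h]; rfl
  rw [s_apply] at h1
  have h3 : A.mulVec (Pi.single j (1:ℤ)) j = A j j := by simp [Matrix.mulVec_single]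
  have := congrFun h1 j
  rw [h3, h2 j] at this
  simp at this

lemma len2_pos_of_ne_one {i j : Fin n} {u : G} (hu : W2 A h2 i j u) (hne : u ≠ 1) :
    1 ≤ len2 A h2 i j u := by
  by_contra h
  push_neg at h
  have h0 : len2 A h2 i j u = 0 := by omega
  obtain ⟨L, hL, hLu⟩ := exists_word2_len2 A h2 i j hu
  rw [h0, List.length_eq_zero_iff] at hL
  rw [hL, word2_nil] at hLu
  exact hne hLu

lemma len2_gen_eq_one (i j : Fin n) (b : Bool) :
    len2 A h2 i j (gen A h2 i j b) = 1 := by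
  have h1 : len2 A h2 i j (gen A h2 i j b) ≤ 1 :=
    len2_le_of_word2 A h2 i j [b] (word2_singleton A h2 i j b).symm
  have h2' : 1 ≤ len2 A h2 i j (gen A h2 i j b) := by
    apply len2_pos_of_ne_one A h2 ⟨[b], (word2_singleton A h2 i j b).symm⟩
    cases b
    · exact s_ne_one A h2 j
    · exact s_ne_one A h2 i
  omega

lemma exists_descent {w : G} (hw : w ∈ weyl A h2) (hw1 : w ≠ 1) :
    ∃ j : Fin n, len A h2 (w * s A h2 j) + 1 = len A h2 w := by
  obtain ⟨L, hL, rfl⟩ := exists_word_len A h2 hw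
  have hnil : L ≠ [] := by
    intro h
    rw [h, word_nil] at hw1
    exact hw1 rfl
  obtain ⟨P, jj, hPL⟩ : ∃ P jj, L = P ++ [jj] :=
    ⟨L.dropLast, L.getLast hnil, (List.dropLast_append_getLast hnil).symm⟩
  refine ⟨jj, ?_⟩
  have hshort : word A h2 L * s A h2 jj = word A h2 P := by
    rw [hPL, word_append, word_singleton, mul_assoc, s_mul_self, mul_one]
  have h1 : len A h2 (word A h2 L * s A h2 jj) ≤ L.length - 1 := by
    calc len A h2 _ ≤ P.length := len_le_of_word A h2 _ hshort
      _ = L.length - 1 := by rw [hPL]; simp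
  have h2' : 1 ≤ L.length := by rw [hPL]; simp
  rcases len_mul_s_cases A h2 hw jj with h | h
  · omega
  · omega

theorem fl (hoff : ∀ i j, i ≠ j → A i j ≤ 0) (hsym : ∀ i j, A i j = 0 ↔ A j i = 0) :
    ∀ (k : ℕ) (w : G), w ∈ weyl A h2 → len A h2 w ≤ k →
      ∀ i : Fin n, len A h2 w < len A h2 (w * s A h2 i) →
        ∀ p, 0 ≤ w (Pi.single i 1) p := by
  intro k
  induction k with
  | zero =>
      intro w hw hlen i _ p
      have hw1 : w = 1 := eq_one_of_len_zero A h2 hw (by omega)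
      subst hw1
      rw [one_apply']
      rw [Pi.single_apply]
      split <;> norm_num
  | succ k ih =>
      intro w hw hlen i hlt p
      by_cases hw1 : w = 1
      · subst hw1
        rw [one_apply', Pi.single_apply]
        split <;> norm_num
      obtain ⟨j, hdesc⟩ := exists_descent A h2 hw hw1
      have hij : i ≠ j := by
        intro h
        rw [← h] at hdesc
        omega
      -- the minimal coset decomposition
      set M : Set ℕ := {k' | ∃ v u' : G, v ∈ weyl A h2 ∧ W2 A h2 i j u' ∧
        w = v * u' ∧ len A h2 w = len A h2 v + len2 A h2 i j u' ∧ len A h2 v = k'} with hM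
      have hwσj : w * s A h2 j ∈ weyl A h2 := Subgroup.mul_mem _ hw (s_mem A h2 j)
      have hMne : (len A h2 (w * s A h2 j)) ∈ M := by
        refine ⟨w * s A h2 j, gen A h2 i j false, hwσj,
          ⟨[false], (word2_singleton A h2 i j false).symm⟩, ?_, ?_, rfl⟩
        · rw [gen_false, mul_assoc, s_mul_self, mul_one]
        · rw [len2_gen_eq_one]; omega
      obtain ⟨v, u', hvW, hu'W, hvu, hlensum, hlenv⟩ := Nat.sInf_mem ⟨_, hMne⟩
      have hsInf_le : sInf M ≤ len A h2 (w * s A h2 j) := Nat.sInf_le hMne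
      have hv_lt : len A h2 v < len A h2 w := by omega
      have hu'Weyl : u' ∈ weyl A h2 := W2_mem_weyl A h2 i j hu'W
      -- v goes up with both s i and s j
      have hvi : len A h2 v < len A h2 (v * s A h2 i) := by
        rcases len_mul_s_cases A h2 hvW i with h | h
        · omega
        · exfalso
          have hmem : len A h2 (v * s A h2 i) ∈ M := by
            refine ⟨v * s A h2 i, gen A h2 i j true * u',
              Subgroup.mul_mem _ hvW (s_mem A h2 i),
              W2_gen_mul A h2 i j hu'W true, ?_, ?_, rfl⟩
            · rw [gen_true, mul_assoc, ← mul_assoc (s A h2 i), s_mul_self, one_mul, hvu]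
            · have hb1 : len A h2 w ≤ len A h2 (v * s A h2 i) +
                  len2 A h2 i j (gen A h2 i j true * u') := by
                calc len A h2 w = len A h2 ((v * s A h2 i) * (gen A h2 i j true * u')) := by
                      rw [gen_true, mul_assoc, ← mul_assoc (s A h2 i), s_mul_self, one_mul, hvu]
                  _ ≤ _ + _ := len_mul_le A h2
                      (Subgroup.mul_mem _ hvW (s_mem A h2 i))
                      (W2_mem_weyl A h2 i j (W2_gen_mul A h2 i j hu'W true))
                  _ ≤ len A h2 (v * s A h2 i) + len2 A h2 i j (gen A h2 i j true * u') := by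
                      gcongr
                      exact len_le_len2 A h2 i j (W2_gen_mul A h2 i j hu'W true)
              have hb2 : len2 A h2 i j (gen A h2 i j true * u') ≤ len2 A h2 i j u' + 1 :=
                len2_gen_mul_le A h2 i j hu'W true
              omega
          have := Nat.sInf_le hmem
          omega
      have hvj : len A h2 v < len A h2 (v * s A h2 j) := by
        rcases len_mul_s_cases A h2 hvW j with h | h
        · omega
        · exfalso
          have hmem : len A h2 (v * s A h2 j) ∈ M := by
            refine ⟨v * s A h2 j, gen A h2 i j false * u',
              Subgroup.mul_mem _ hvW (s_mem A h2 j),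
              W2_gen_mul A h2 i j hu'W false, ?_, ?_, rfl⟩
            · rw [gen_false, mul_assoc, ← mul_assoc (s A h2 j), s_mul_self, one_mul, hvu]
            · have hb1 : len A h2 w ≤ len A h2 (v * s A h2 j) +
                  len2 A h2 i j (gen A h2 i j false * u') := by
                calc len A h2 w = len A h2 ((v * s A h2 j) * (gen A h2 i j false * u')) := by
                      rw [gen_false, mul_assoc, ← mul_assoc (s A h2 j), s_mul_self, one_mul, hvu]
                  _ ≤ _ + _ := len_mul_le A h2
                      (Subgroup.mul_mem _ hvW (s_mem A h2 j))
                      (W2_mem_weyl A h2 i j (W2_gen_mul A h2 i j hu'W false))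
                  _ ≤ len A h2 (v * s A h2 j) + len2 A h2 i j (gen A h2 i j false * u') := by
                      gcongr
                      exact len_le_len2 A h2 i j (W2_gen_mul A h2 i j hu'W false)
              have hb2 : len2 A h2 i j (gen A h2 i j false * u') ≤ len2 A h2 i j u' + 1 :=
                len2_gen_mul_le A h2 i j hu'W false
              omega
          have := Nat.sInf_le hmem
          omega
      -- u' goes up with s i in the dihedral group
      have hu'lt : len2 A h2 i j u' < len2 A h2 i j (u' * s A h2 i) := by
        have hne := len2_mul_gen_ne A h2 i j hu'W true
        rw [gen_true] at hne
        have hle : len2 A h2 i j (u' * s A h2 i) ≤ len2 A h2 i j u' + 1 := by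
          have := len2_mul_gen_le A h2 i j hu'W true
          rwa [gen_true] at this
        rcases Nat.lt_or_ge (len2 A h2 i j u') (len2 A h2 i j (u' * s A h2 i)) with h | h
        · exact h
        · exfalso
          -- len2 (u' s i) ≤ len2 u' - 1, contradict hlt
          have hu'si : W2 A h2 i j (u' * s A h2 i) := by
            have := W2_mul_gen A h2 i j hu'W true
            rwa [gen_true] at this
          have hcontra : len A h2 (w * s A h2 i) ≤ len A h2 w - 1 := by
            have heq : w * s A h2 i = v * (u' * s A h2 i) := by
              rw [hvu, mul_assoc]
            calc len A h2 (w * s A h2 i) = len A h2 (v * (u' * s A h2 i)) := by rw [heq]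
              _ ≤ len A h2 v + len A h2 (u' * s A h2 i) :=
                  len_mul_le A h2 hvW (W2_mem_weyl A h2 i j hu'si)
              _ ≤ len A h2 v + len2 A h2 i j (u' * s A h2 i) := by
                  gcongr; exact len_le_len2 A h2 i j hu'si
              _ ≤ len A h2 w - 1 := by omega
          omega
      -- rank 2 positivity
      obtain ⟨q, hq1, hq2, hq3⟩ := rank2 A h2 i j hij (hoff i j hij)
        (hoff j i (Ne.symm hij)) (hsym i j) hu'W hu'lt
      -- positivity of v e_i and v e_j by induction
      have hpi : ∀ p, 0 ≤ v (Pi.single i 1) p := ih v hvW (by omega) i hvi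
      have hpj : ∀ p, 0 ≤ v (Pi.single j 1) p := ih v hvW (by omega) j hvj
      -- conclude
      have hw_eq : w (Pi.single i 1) = q.1 • v (Pi.single i 1) + q.2 • v (Pi.single j 1) := by
        rw [hvu, mul_apply', hq3]
        rw [iota]
        rw [map_add, _root_.map_smul, _root_.map_smul]
      rw [hw_eq]
      have := hpi p
      have := hpj p
      simp only [Pi.add_apply, Pi.smul_apply, smul_eq_mul]
      positivity

end FL
section Roots

variable (A : Matrix (Fin n) (Fin n) ℤ) (h2 : ∀ i, A i i = 2)

local notation "G" => ((Fin n → ℤ) ≃ₗ[ℤ] (Fin n → ℤ))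

/-- negative vectors -/
def IsNeg (v : Fin n → ℤ) : Prop := v ≠ 0 ∧ ∀ p, v p ≤ 0

lemma not_isPos_isNeg {v : Fin n → ℤ} (h1 : IsPos v) (h2' : IsNeg v) : False := by
  apply h1.1
  funext p
  exact le_antisymm (h2'.2 p) (h1.2 p)

lemma isPos_neg_of_isNeg {v : Fin n → ℤ} (h : IsNeg v) : IsPos (-v) :=
  ⟨fun h0 => h.1 (by simpa using congrArg Neg.neg h0), fun p => by simpa using h.2 p⟩

lemma isNeg_neg_of_isPos {v : Fin n → ℤ} (h : IsPos v) : IsNeg (-v) :=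
  ⟨fun h0 => h.1 (by simpa using congrArg Neg.neg h0), fun p => by simpa using h.2 p⟩

lemma single_mem_realRoots (i : Fin n) : Pi.single i 1 ∈ realRoots A h2 :=
  ⟨1, Subgroup.one_mem _, i, rfl⟩

lemma real_ne_zero {α : Fin n → ℤ} (hα : α ∈ realRoots A h2) : α ≠ 0 := by
  obtain ⟨g, hg, i, rfl⟩ := hα
  intro h0
  have h1 : Pi.single i (1:ℤ) = (0 : Fin n → ℤ) := by
    have := congrArg g.symm h0
    simpa using this
  have := congrFun h1 i
  simp at this

lemma real_w_mem {α : Fin n → ℤ} (hα : α ∈ realRoots A h2) {g' : G}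
    (hg' : g' ∈ weyl A h2) : g' α ∈ realRoots A h2 := by
  obtain ⟨g, hg, i, rfl⟩ := hα
  exact ⟨g' * g, Subgroup.mul_mem _ hg' hg, i, rfl⟩

lemma s_single_self (i : Fin n) : s A h2 i (Pi.single i 1) = -(Pi.single i 1) := by
  rw [s_apply]
  have h3 : A.mulVec (Pi.single i (1:ℤ)) i = A i i := by simp [Matrix.mulVec_single]
  rw [h3, h2 i]
  module

lemma real_neg_mem {α : Fin n → ℤ} (hα : α ∈ realRoots A h2) : -α ∈ realRoots A h2 := by
  obtain ⟨g, hg, i, rfl⟩ := hα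
  refine ⟨g * s A h2 i, Subgroup.mul_mem _ hg (s_mem A h2 i), i, ?_⟩
  rw [mul_apply', s_single_self]
  simp

lemma real_pos_or_neg (hoff : ∀ i j, i ≠ j → A i j ≤ 0)
    (hsym : ∀ i j, A i j = 0 ↔ A j i = 0) {α : Fin n → ℤ}
    (hα : α ∈ realRoots A h2) : IsPos α ∨ IsNeg α := by
  obtain ⟨g, hg, i, rfl⟩ := hα
  have hne : g (Pi.single i 1) ≠ 0 := real_ne_zero A h2 ⟨g, hg, i, rfl⟩
  rcases len_mul_s_cases A h2 hg i with h | h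
  · left
    refine ⟨hne, ?_⟩
    exact fl A h2 hoff hsym (len A h2 g) g hg le_rfl i (by omega)
  · right
    have hgs : g * s A h2 i ∈ weyl A h2 := Subgroup.mul_mem _ hg (s_mem A h2 i)
    have hgss : (g * s A h2 i) * s A h2 i = g := by
      rw [mul_assoc, s_mul_self, mul_one]
    have hpos : ∀ p, 0 ≤ (g * s A h2 i) (Pi.single i 1) p := by
      apply fl A h2 hoff hsym (len A h2 (g * s A h2 i)) _ hgs le_rfl i
      rw [hgss]; omega
    have heq : g (Pi.single i 1) = -((g * s A h2 i) (Pi.single i 1)) := by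
      conv_lhs => rw [← hgss]
      rw [mul_apply', s_single_self]
      simp
    refine ⟨hne, fun p => ?_⟩
    rw [heq]
    simpa using hpos p

lemma single_of_support {α : Fin n → ℤ} (hα : α ∈ realRoots A h2) (hpos : IsPos α)
    (i : Fin n) (hsupp : ∀ p, p ≠ i → α p = 0) : α = Pi.single i 1 := by
  obtain ⟨c, hc⟩ : ∃ c : ℤ, α = c • Pi.single i 1 := by
    refine ⟨α i, ?_⟩
    funext p
    by_cases hp : p = i
    · subst hp; simp
    · rw [hsupp p hp]; simp [Pi.single_apply, hp]
  have hc0 : 0 ≤ c := by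
    have := hpos.2 i
    rw [hc] at this
    simpa using this
  obtain ⟨g, hg, l, hgl⟩ := hα
  have h1 : Pi.single l (1:ℤ) = c • g.symm (Pi.single i 1) := by
    have h0 := congrArg g.symm hgl
    rw [LinearEquiv.symm_apply_apply] at h0
    rw [← h0, hc, _root_.map_smul]
  have h2' : (1 : ℤ) = c * g.symm (Pi.single i 1) l := by
    have := congrFun h1 l
    simpa using this
  have h3 : c = 1 := by
    rcases Int.eq_one_or_neg_one_of_mul_eq_one h2'.symm with h | h
    · exact h
    · omega
  rw [hc, h3, one_smul]

lemma s_perm (hoff : ∀ i j, i ≠ j → A i j ≤ 0) (hsym : ∀ i j, A i j = 0 ↔ A j i = 0)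
    {α : Fin n → ℤ} (hα : α ∈ realRoots A h2) (hpos : IsPos α) (i : Fin n)
    (hne : α ≠ Pi.single i 1) : IsPos (s A h2 i α) := by
  have hreal' : s A h2 i α ∈ realRoots A h2 := real_w_mem A h2 hα (s_mem A h2 i)
  rcases real_pos_or_neg A h2 hoff hsym hreal' with h | h
  · exact h
  · exfalso
    have hcoord : ∀ p, p ≠ i → α p = 0 := by
      intro p hp
      have h1 : s A h2 i α p = α p := by
        rw [s_apply]
        simp [Pi.single_apply, hp]
      have h2' := h.2 p
      rw [h1] at h2'
      exact le_antisymm h2' (hpos.2 p)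
    exact hne (single_of_support A h2 hα hpos i hcoord)

end Roots
section Npos

variable (A : Matrix (Fin n) (Fin n) ℤ) (h2 : ∀ i, A i i = 2)

local notation "G" => ((Fin n → ℤ) ≃ₗ[ℤ] (Fin n → ℤ))

/-- the inversion set: positive real roots sent to negative -/
def Npos (w : G) : Set (Fin n → ℤ) :=
  {α | α ∈ realRoots A h2 ∧ IsPos α ∧ IsNeg (w α)}

lemma Npos_one : Npos A h2 1 = ∅ := by
  ext α
  simp only [Npos, Set.mem_setOf_eq, Set.mem_empty_iff_false, iff_false]
  rintro ⟨-, hpos, hneg⟩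
  exact not_isPos_isNeg hpos hneg

lemma isPos_single (i : Fin n) : IsPos (Pi.single i (1:ℤ)) := by
  constructor
  · intro h
    have := congrFun h i
    simp at this
  · intro p
    rw [Pi.single_apply]
    split <;> norm_num

lemma Npos_mul_s (hoff : ∀ i j, i ≠ j → A i j ≤ 0) (hsym : ∀ i j, A i j = 0 ↔ A j i = 0)
    {w : G} (hw : w ∈ weyl A h2) (i : Fin n)
    (hpos : IsPos (w (Pi.single i 1))) :
    Npos A h2 (w * s A h2 i) = insert (Pi.single i 1) ((s A h2 i) '' (Npos A h2 w)) := by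
  ext α
  constructor
  · rintro ⟨hre, hp, hneg⟩
    by_cases hei : α = Pi.single i 1
    · exact Or.inl hei
    · right
      refine ⟨s A h2 i α, ⟨?_, ?_, ?_⟩, ?_⟩
      · exact real_w_mem A h2 hre (s_mem A h2 i)
      · exact s_perm A h2 hoff hsym hre hp i hei
      · have : w (s A h2 i α) = (w * s A h2 i) α := rfl
        rw [this]
        exact hneg
      · have : s A h2 i (s A h2 i α) = (s A h2 i * s A h2 i) α := rfl
        rw [this, s_mul_self]
        rfl
  · rintro (rfl | ⟨β, ⟨hre, hp, hneg⟩, rfl⟩)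
    · refine ⟨single_mem_realRoots A h2 i, isPos_single i, ?_⟩
      have h1 : (w * s A h2 i) (Pi.single i 1) = -(w (Pi.single i 1)) := by
        rw [mul_apply', s_single_self]
        simp
      rw [h1]
      exact isNeg_neg_of_isPos hpos
    · have hβi : β ≠ Pi.single i 1 := by
        rintro rfl
        exact not_isPos_isNeg hpos hneg
      refine ⟨real_w_mem A h2 hre (s_mem A h2 i),
        s_perm A h2 hoff hsym hre hp i hβi, ?_⟩
      have h1 : (w * s A h2 i) (s A h2 i β) = w ((s A h2 i * s A h2 i) β) := rfl
      rw [h1, s_mul_self]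
      exact hneg

lemma single_not_mem_image (i : Fin n) {w : G} :
    Pi.single i 1 ∉ (s A h2 i) '' (Npos A h2 w) := by
  rintro ⟨β, ⟨-, hp, -⟩, hβ⟩
  have hβval : β = -(Pi.single i 1) := by
    have := congrArg (s A h2 i) hβ
    have h1 : s A h2 i (s A h2 i β) = (s A h2 i * s A h2 i) β := rfl
    rw [h1, s_mul_self, s_single_self] at this
    exact this
  have := hp.2 i
  rw [hβval] at this
  simp at this

lemma Npos_card (hoff : ∀ i j, i ≠ j → A i j ≤ 0) (hsym : ∀ i j, A i j = 0 ↔ A j i = 0) :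
    ∀ (k : ℕ) (w : G), w ∈ weyl A h2 → len A h2 w = k →
      (Npos A h2 w).Finite ∧ (Npos A h2 w).ncard = k := by
  intro k
  induction k with
  | zero =>
      intro w hw hlen
      have : w = 1 := eq_one_of_len_zero A h2 hw hlen
      subst this
      rw [Npos_one]
      simp
  | succ k ih =>
      intro w hw hlen
      have hw1 : w ≠ 1 := by
        intro h
        rw [h, len_one] at hlen
        omega
      obtain ⟨j, hdesc⟩ := exists_descent A h2 hw hw1
      set w' := w * s A h2 j with hw'def
      have hw'W : w' ∈ weyl A h2 := Subgroup.mul_mem _ hw (s_mem A h2 j)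
      have hww' : w' * s A h2 j = w := by
        rw [hw'def, mul_assoc, s_mul_self, mul_one]
      have hlenw' : len A h2 w' = k := by omega
      have hup : len A h2 w' < len A h2 (w' * s A h2 j) := by rw [hww']; omega
      have hposj : IsPos (w' (Pi.single j 1)) := by
        constructor
        · exact real_ne_zero A h2 ⟨w', hw'W, j, rfl⟩
        · exact fl A h2 hoff hsym (len A h2 w') w' hw'W le_rfl j hup
      obtain ⟨hfin, hcard⟩ := ih w' hw'W hlenw'
      have hswap := Npos_mul_s A h2 hoff hsym hw'W j hposj
      rw [hww'] at hswap
      have hinj : Function.Injective (s A h2 j) := (s A h2 j).injective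
      have hfin2 : ((s A h2 j) '' (Npos A h2 w')).Finite := hfin.image _
      constructor
      · rw [hswap]
        exact hfin2.insert _
      · rw [hswap, Set.ncard_insert_of_notMem (single_not_mem_image A h2 j) hfin2,
          Set.ncard_image_of_injective _ hinj, hcard]

lemma Npos_subset_of_add (hoff : ∀ i j, i ≠ j → A i j ≤ 0)
    (hsym : ∀ i j, A i j = 0 ↔ A j i = 0) {u v : G}
    (hu : u ∈ weyl A h2) (hv : v ∈ weyl A h2)
    (hadd : len A h2 (u * v) = len A h2 u + len A h2 v) :
    Npos A h2 v ⊆ Npos A h2 (u * v) := by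
  obtain ⟨hfinuv, hcarduv⟩ := Npos_card A h2 hoff hsym _ _ (Subgroup.mul_mem _ hu hv) rfl
  obtain ⟨hfinu, hcardu⟩ := Npos_card A h2 hoff hsym _ _ hu rfl
  obtain ⟨hfinv, hcardv⟩ := Npos_card A h2 hoff hsym _ _ hv rfl
  -- the difference injects into Npos u
  have hDsub : v '' (Npos A h2 (u * v) \ Npos A h2 v) ⊆ Npos A h2 u := by
    rintro x ⟨α, ⟨⟨hre, hp, hneg⟩, hnotin⟩, rfl⟩
    have hvre : v α ∈ realRoots A h2 := real_w_mem A h2 hre hv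
    have hvpos : IsPos (v α) := by
      rcases real_pos_or_neg A h2 hoff hsym hvre with h | h
      · exact h
      · exact absurd ⟨hre, hp, h⟩ hnotin
    refine ⟨hvre, hvpos, ?_⟩
    have : u (v α) = (u * v) α := rfl
    rw [this]
    exact hneg
  have hD : (Npos A h2 (u * v) \ Npos A h2 v).ncard ≤ len A h2 u := by
    calc (Npos A h2 (u * v) \ Npos A h2 v).ncard
        = (v '' (Npos A h2 (u * v) \ Npos A h2 v)).ncard :=
          (Set.ncard_image_of_injective _ v.injective).symm
      _ ≤ (Npos A h2 u).ncard := Set.ncard_le_ncard hDsub hfinu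
      _ = len A h2 u := hcardu
  have hsplit : (Npos A h2 (u * v) ∩ Npos A h2 v).ncard
      + (Npos A h2 (u * v) \ Npos A h2 v).ncard = (Npos A h2 (u * v)).ncard :=
    Set.ncard_inter_add_ncard_diff_eq_ncard _ _ hfinuv
  have hge : (Npos A h2 v).ncard ≤ (Npos A h2 (u * v) ∩ Npos A h2 v).ncard := by
    omega
  have heq : Npos A h2 (u * v) ∩ Npos A h2 v = Npos A h2 v := by
    apply Set.eq_of_subset_of_ncard_le Set.inter_subset_right ?_ hfinv
    omega
  intro α hα
  have : α ∈ Npos A h2 (u * v) ∩ Npos A h2 v := by rw [heq]; exact hα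
  exact this.1

end Npos
section Main

variable (A : Matrix (Fin n) (Fin n) ℤ) (h2 : ∀ i, A i i = 2)

local notation "G" => ((Fin n → ℤ) ≃ₗ[ℤ] (Fin n → ℤ))

lemma isNeg_of_isPos_neg {v : Fin n → ℤ} (h : IsPos (-v)) : IsNeg v := by
  have := isNeg_neg_of_isPos h
  simpa using this

lemma mem_negRoots_iff (hsym : ∀ i j, A i j = 0 ↔ A j i = 0) (v : Fin n → ℤ) :
    v ∈ negRoots A h2 hsym ↔ -v ∈ posRoots A h2 hsym := by
  rw [negRoots, Set.mem_neg]

lemma real_mem_negRoots (hsym : ∀ i j, A i j = 0 ↔ A j i = 0) {v : Fin n → ℤ}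
    (hre : v ∈ realRoots A h2) (hneg : IsNeg v) : v ∈ negRoots A h2 hsym := by
  rw [mem_negRoots_iff]
  refine ⟨?_, isPos_neg_of_isNeg hneg⟩
  exact Or.inl (Or.inl (real_neg_mem A h2 hre))

lemma isNeg_of_mem_negRoots (hsym : ∀ i j, A i j = 0 ↔ A j i = 0) {v : Fin n → ℤ}
    (h : v ∈ negRoots A h2 hsym) : IsNeg v := by
  rw [mem_negRoots_iff] at h
  exact isNeg_of_isPos_neg h.2

end Main

theorem neg_iff_one_le_of_straight' (A : Matrix (Fin n) (Fin n) ℤ)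
    (hA : IsGCM A)
    (ω : (Fin n → ℤ) ≃ₗ[ℤ] (Fin n → ℤ)) (hω : ω ∈ weyl A hA.1)
    (hlen : ∀ l : ℤ, len A hA.1 (ω ^ l) = l.natAbs * len A hA.1 ω)
    (β : Fin n → ℤ) (hβre : β ∈ realRoots A hA.1) (hβ : β ∈ posRoots A hA.1 hA.2.2)
    (hωβ : ω β ∈ negRoots A hA.1 hA.2.2) :
    ∀ l : ℤ, (ω ^ l) β ∈ negRoots A hA.1 hA.2.2 ↔ 1 ≤ l := by
  obtain ⟨h2, hoff, hsym⟩ := hA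
  have hβpos : IsPos β := hβ.2
  have hωβneg : IsNeg (ω β) := isNeg_of_mem_negRoots A h2 hsym hωβ
  have hβNpos : β ∈ Npos A h2 ω := ⟨hβre, hβpos, hωβneg⟩
  -- nat powers
  have hlenNat : ∀ m : ℕ, len A h2 (ω ^ m) = m * len A h2 ω := by
    intro m
    have := hlen (m : ℤ)
    rwa [zpow_natCast, Int.natAbs_natCast] at this
  have hpow_mem : ∀ m : ℕ, ω ^ m ∈ weyl A h2 := fun m => pow_mem hω m
  -- β ∈ Npos (ω^(m+1)) for all m
  have hkey : ∀ m : ℕ, β ∈ Npos A h2 (ω ^ (m + 1)) := by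
    intro m
    have hadd : len A h2 (ω ^ m * ω) = len A h2 (ω ^ m) + len A h2 ω := by
      rw [← pow_succ, hlenNat, hlenNat]
      ring
    have hsub := Npos_subset_of_add A h2 hoff hsym (hpow_mem m) hω hadd
    rw [pow_succ]
    exact hsub hβNpos
  intro l
  constructor
  · -- if ω^l β is negative then l ≥ 1
    intro hmem
    by_contra hl
    push_neg at hl
    have hl0 : l ≤ 0 := by omega
    have hneg : IsNeg ((ω ^ l) β) := isNeg_of_mem_negRoots A h2 hsym hmem
    rcases eq_or_lt_of_le hl0 with heq | hlt
    · -- l = 0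
      rw [heq, zpow_zero] at hneg
      exact not_isPos_isNeg hβpos hneg
    · -- l < 0
      set m : ℕ := (-l).toNat with hm
      have hml : (m : ℤ) = -l := Int.toNat_of_nonneg (by omega)
      set γ : Fin n → ℤ := -((ω ^ l) β) with hγ
      have hγpos : IsPos γ := isPos_neg_of_isNeg hneg
      have hγre : γ ∈ realRoots A h2 := by
        apply real_neg_mem
        exact real_w_mem A h2 hβre (zpow_mem hω l)
      have hωmγ : (ω ^ m) γ = -β := by
        have h1 : (ω ^ m) ((ω ^ l) β) = β := by
          have : (ω ^ m) * (ω ^ l) = 1 := by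
            rw [← zpow_natCast, ← _root_.zpow_add, hml]
            simp
          have h2' : (ω ^ m) ((ω ^ l) β) = ((ω ^ m) * (ω ^ l)) β := rfl
          rw [h2', this]
          rfl
        rw [hγ, map_neg, h1]
      have hγNpos : γ ∈ Npos A h2 (ω ^ m) := by
        refine ⟨hγre, hγpos, ?_⟩
        rw [hωmγ]
        exact isNeg_neg_of_isPos hβpos
      have hadd : len A h2 (ω * ω ^ m) = len A h2 ω + len A h2 (ω ^ m) := by
        rw [← pow_succ', hlenNat, hlenNat]
        ring
      have hsub := Npos_subset_of_add A h2 hoff hsym hω (hpow_mem m) hadd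
      have hfinal := (hsub hγNpos).2.2
      have heval : (ω * ω ^ m) γ = -(ω β) := by
        have : (ω * ω ^ m) γ = ω ((ω ^ m) γ) := rfl
        rw [this, hωmγ, map_neg]
      rw [heval] at hfinal
      exact not_isPos_isNeg (isPos_neg_of_isNeg hωβneg) hfinal
  · -- if l ≥ 1 then ω^l β is negative
    intro hl
    set m : ℕ := (l - 1).toNat with hm
    have hml : (m : ℤ) = l - 1 := Int.toNat_of_nonneg (by omega)
    have hcast : ω ^ l = ω ^ (m + 1) := by
      rw [← zpow_natCast]
      congr 1
      push_cast
      omega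
    have hmem := hkey m
    have hneg : IsNeg ((ω ^ l) β) := by
      rw [hcast]
      exact hmem.2.2
    apply real_mem_negRoots A h2 hsym ?_ hneg
    exact real_w_mem A h2 hβre (zpow_mem hω l)
/-- if `A` is indecomposable with infinite Weyl group, `ω ∈ W` satisfies
`ℓ(ω^l) = |l|·ℓ(ω)` for all `l ∈ ℤ`, and `β` is a real root in `Δ₊` with `ωβ ∈ Δ₋`, then
for every integer `l`, `ω^l β ∈ Δ₋ ↔ l ≥ 1`. -/
theorem neg_iff_one_le_of_straight (n : ℕ) (hn : 1 ≤ n) (A : Matrix (Fin n) (Fin n) ℤ)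
    (hA : IsGCM A) (hInd : Indecomposable A hA.2.2)
    (hWinf : Infinite (weyl A hA.1))
    (ω : (Fin n → ℤ) ≃ₗ[ℤ] (Fin n → ℤ)) (hω : ω ∈ weyl A hA.1)
    (hlen : ∀ l : ℤ, len A hA.1 (ω ^ l) = l.natAbs * len A hA.1 ω)
    (β : Fin n → ℤ) (hβre : β ∈ realRoots A hA.1) (hβ : β ∈ posRoots A hA.1 hA.2.2)
    (hωβ : ω β ∈ negRoots A hA.1 hA.2.2) :
    ∀ l : ℤ, (ω ^ l) β ∈ negRoots A hA.1 hA.2.2 ↔ 1 ≤ l := by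
  exact neg_iff_one_le_of_straight' A hA ω hω hlen β hβre hβ hωβ

end KacMoodyPaper
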